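/- Let (z_n) be a separated sequence in the unit disc satisfying condition (1.3) for some M > 0 and 0 < α < 1, and suppose (z_n) is an interpolating sequence for the bounded analytic functions H^∞ (in the Carleson sense). Then (z_n) is an interpolating sequence for the zero-free bounded analytic functions: there exist ε > 0 and C > 0 such that for every sequence of nonzero complex values (w_n) with sup|w_n| < C and |log(log(C/|w_n|)) − log(log(C/|w_m|))| ≤ ε β(z_n,z_m) for all n,m, there exists a zero-free f ∈ H^∞(D) with f(z_n) = w_n for all n. (This uses, as a hypothesis, that separated sequences with (1.3) are interpolating for h⁺.) -/

import Mathlib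

/-- The open unit disc in the complex plane. -/
def unitDisc : Set ℂ := Metric.ball 0 1

/-- A real-valued function is harmonic on the unit disc iff it is the real part
of a holomorphic function there (the disc is simply connected). -/
def HarmonicOnDisc (u : ℂ → ℝ) : Prop :=
  ∃ f : ℂ → ℂ, DifferentiableOn ℂ f unitDisc ∧ ∀ z ∈ unitDisc, u z = (f z).re

/-- The pseudohyperbolic distance ρ(z,w) = |(z-w)/(1 - conj w * z)|. -/
noncomputable def pseudoDist (z w : ℂ) : ℝ :=
  ‖(z - w) / (1 - (starRingEnd ℂ) w * z)‖

/-- The base-2 hyperbolic distance β(z,w) = log₂((1+ρ)/(1-ρ)). -/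
noncomputable def hypDist (z w : ℂ) : ℝ :=
  Real.logb 2 ((1 + pseudoDist z w) / (1 - pseudoDist z w))

/-- A separated sequence satisfying condition (1.3) which is interpolating for
`H^∞` (and, by the main theorem of the paper, assumed interpolating for `h⁺`)
is interpolating for the zero-free bounded analytic functions: there are
`ε, C > 0` such that any nonvanishing targets `w_n` with `sup |w_n| < C` and
`|log log(C/|w_n|) - log log(C/|w_m|)| ≤ ε β(z_n,z_m)` are interpolated by a
zero-free bounded analytic function on the disc. -/
theorem zero_free_interpolation (z : ℕ → ℂ) (hz : ∀ n, z n ∈ unitDisc)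
    (s : ℝ) (hs : 0 < s) (hsep : ∀ n m, n ≠ m → s ≤ hypDist (z n) (z m))
    (M α : ℝ) (hM : 0 < M) (hα : 0 < α) (hα1 : α < 1)
    (h13 : ∀ n : ℕ, ∀ l : ℕ, 1 ≤ l → ∀ F : Finset ℕ,
      (∀ j ∈ F, hypDist (z j) (z n) ≤ (l : ℝ)) →
      (F.card : ℝ) ≤ M * (2:ℝ) ^ (α * (l : ℝ)))
    (hHinf : ∀ w : ℕ → ℂ, (∃ B : ℝ, ∀ n, ‖w n‖ ≤ B) →
      ∃ f : ℂ → ℂ, DifferentiableOn ℂ f unitDisc ∧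
        (∃ B : ℝ, ∀ ζ ∈ unitDisc, ‖f ζ‖ ≤ B) ∧ ∀ n, f (z n) = w n)
    (hplus : ∃ ε : ℝ, 0 < ε ∧ ∀ t : ℕ → ℝ, (∀ n, 0 < t n) →
      (∀ n m, |Real.logb 2 (t n) - Real.logb 2 (t m)| ≤ ε * hypDist (z n) (z m)) →
      ∃ u : ℂ → ℝ, HarmonicOnDisc u ∧ (∀ ζ ∈ unitDisc, 0 < u ζ) ∧
        ∀ n, u (z n) = t n) :
    ∃ ε C : ℝ, 0 < ε ∧ 0 < C ∧ ∀ w : ℕ → ℂ, (∀ n, w n ≠ 0) →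
      (∀ n, ‖w n‖ < C) →
      (∀ n m, |Real.log (Real.log (C / ‖w n‖)) -
          Real.log (Real.log (C / ‖w m‖))| ≤ ε * hypDist (z n) (z m)) →
      ∃ f : ℂ → ℂ, DifferentiableOn ℂ f unitDisc ∧
        (∃ B : ℝ, ∀ ζ ∈ unitDisc, ‖f ζ‖ ≤ B) ∧
        (∀ ζ ∈ unitDisc, f ζ ≠ 0) ∧ ∀ n, f (z n) = w n := by
  obtain ⟨ε₀, hε₀, H⟩ := hplus
  have h2 : (0:ℝ) < Real.log 2 := Real.log_pos one_lt_two
  refine ⟨ε₀ * Real.log 2, 1, by positivity, one_pos, ?_⟩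
  intro w hw0 hwC hlip
  have habs : ∀ n, 0 < ‖w n‖ := fun n => norm_pos_iff.mpr (hw0 n)
  set t : ℕ → ℝ := fun n => Real.log (1 / ‖w n‖) with ht
  have htpos : ∀ n, 0 < t n := by
    intro n
    apply Real.log_pos
    rw [lt_div_iff₀ (habs n), one_mul]
    exact hwC n
  have hcond : ∀ n m, |Real.logb 2 (t n) - Real.logb 2 (t m)| ≤
      ε₀ * hypDist (z n) (z m) := by
    intro n m
    rw [Real.logb, Real.logb, div_sub_div_same, abs_div, abs_of_pos h2,
      div_le_iff₀ h2]
    calc |Real.log (t n) - Real.log (t m)|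
        ≤ ε₀ * Real.log 2 * hypDist (z n) (z m) := hlip n m
      _ = ε₀ * hypDist (z n) (z m) * Real.log 2 := by ring
  obtain ⟨u, ⟨F, hFd, hFre⟩, hupos, huz⟩ := H t htpos hcond
  -- the modulus of exp(-F(z n)) equals |w n|
  have hmod : ∀ n, ‖Complex.exp (-(F (z n)))‖ = ‖w n‖ := by
    intro n
    rw [Complex.norm_exp]
    have h1 : (-(F (z n))).re = -(u (z n)) := by
      rw [Complex.neg_re, hFre _ (hz n)]
    rw [h1, huz]
    show Real.exp (-(Real.log (1 / ‖w n‖))) = _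
    rw [one_div, Real.log_inv, neg_neg, Real.exp_log (habs n)]
  have hq : ∀ n, w n / Complex.exp (-(F (z n))) ≠ 0 := fun n =>
    div_ne_zero (hw0 n) (Complex.exp_ne_zero _)
  set c : ℕ → ℂ := fun n => Complex.log (w n / Complex.exp (-(F (z n)))) with hc
  have hqabs : ∀ n, ‖w n / Complex.exp (-(F (z n)))‖ = 1 := by
    intro n
    rw [norm_div, hmod n, div_self (ne_of_gt (habs n))]
  have hcb : ∀ n, ‖c n‖ ≤ Real.pi := by
    intro n
    have h1 : ‖c n‖ ≤ |(c n).re| + |(c n).im| :=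
      Complex.norm_le_abs_re_add_abs_im _
    have hre : (c n).re = 0 := by
      show (Complex.log _).re = 0
      rw [Complex.log_re, hqabs n, Real.log_one]
    have him : |(c n).im| ≤ Real.pi := by
      show |(Complex.log _).im| ≤ Real.pi
      rw [Complex.log_im]
      exact Complex.abs_arg_le_pi _
    calc ‖c n‖ ≤ |(c n).re| + |(c n).im| := h1
      _ ≤ 0 + Real.pi := by rw [hre, abs_zero]; exact add_le_add le_rfl him
      _ = Real.pi := zero_add _
  obtain ⟨g, hgd, ⟨Bg, hBg⟩, hgz⟩ := hHinf c ⟨Real.pi, hcb⟩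
  refine ⟨fun ζ => Complex.exp (-(F ζ) + g ζ), ?_, ⟨Real.exp Bg, ?_⟩, ?_, ?_⟩
  · exact (hFd.neg.add hgd).cexp
  · intro ζ hζ
    rw [Complex.norm_exp]
    apply Real.exp_le_exp.mpr
    have h1 : (-(F ζ) + g ζ).re = -(u ζ) + (g ζ).re := by
      rw [Complex.add_re, Complex.neg_re, hFre ζ hζ]
    rw [h1]
    have h2 : (g ζ).re ≤ Bg := le_trans (Complex.re_le_norm _) (hBg ζ hζ)
    linarith [hupos ζ hζ]
  · intro ζ _
    exact Complex.exp_ne_zero _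
  · intro n
    show Complex.exp (-(F (z n)) + g (z n)) = w n
    rw [Complex.exp_add, hgz n, hc, Complex.exp_log (hq n)]
    field_simp
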